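/- The uniformization maps the unit circle onto the real points of the kernel's zero set: for every complex s with |s| = 1, θ₁(s) and θ₂(s) are real, and conversely every real pair (θ₁, θ₂) with γ(θ₁, θ₂) = 0 equals (θ₁(s), θ₂(s)) for some s with |s| = 1. Moreover the branch points satisfy θ₁(1) = θ₁⁺, θ₁(−1) = θ₁⁻, θ₂(e^{iβ}) = θ₂⁺ and θ₂(−e^{iβ}) = θ₂⁻. -/

import Mathlib

set_option maxHeartbeats 1000000

open Complex in

lemma exists_angle (x w : ℝ) (h : x^2 + w^2 = 1) :
    ∃ φ : ℝ, Real.cos φ = x ∧ Real.sin φ = w := by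
  rcases le_or_gt 0 w with hw | hw
  · refine ⟨Real.arccos x, Real.cos_arccos (by nlinarith) (by nlinarith), ?_⟩
    rw [Real.sin_arccos, show 1 - x^2 = w^2 by linarith, Real.sqrt_sq hw]
  · refine ⟨-Real.arccos x, by rw [Real.cos_neg]; exact Real.cos_arccos (by nlinarith) (by nlinarith), ?_⟩
    rw [Real.sin_neg, Real.sin_arccos, show 1 - x^2 = w^2 by linarith,
      Real.sqrt_sq_eq_abs, abs_of_neg hw]; ring

lemma sq_le_one_aux (s x : ℝ) (hs : 0 < s) (h : 0 ≤ s^2 * (1 - x^2)) : x^2 ≤ 1 := by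
  by_contra hx
  push_neg at hx
  have h2 := mul_pos (pow_pos hs 2) (sub_pos.mpr hx)
  nlinarith
set_option maxHeartbeats 1000000 in
lemma stmt4_ellipse_param (σ11 σ12 σ22 μ1 μ2 : ℝ)
    (h11 : 0 < σ11) (h22 : 0 < σ22) (hdet : 0 < σ11 * σ22 - σ12 ^ 2)
    (hμ1 : μ1 < 0) (hμ2 : μ2 < 0) (β : ℝ)
    (hβ : β = Real.arccos (-σ12 / Real.sqrt (σ11 * σ22)))
    (t1 t2 : ℝ)
    (hγr : (1/2)*(σ11*t1^2 + 2*σ12*t1*t2 + σ22*t2^2) + μ1*t1 + μ2*t2 = 0) :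
    ∃ φ : ℝ, Real.sqrt ((μ2*σ12 - μ1*σ22)^2 + μ2^2*(σ11*σ22 - σ12^2)) * Real.cos φ
        = (σ11*σ22 - σ12^2)*t1 - (μ2*σ12 - μ1*σ22)
      ∧ Real.sqrt ((μ1*σ12 - μ2*σ11)^2 + μ1^2*(σ11*σ22 - σ12^2)) * Real.cos (φ - β)
        = (σ11*σ22 - σ12^2)*t2 - (μ1*σ12 - μ2*σ11) := by
  have hm1 : μ1 ≠ 0 := ne_of_lt hμ1
  have hm2 : μ2 ≠ 0 := ne_of_lt hμ2
  have hm1sq : 0 < μ1^2 := by positivity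
  have hm2sq : 0 < μ2^2 := by positivity
  obtain ⟨S, hS⟩ : ∃ x, x = Real.sqrt (σ11*σ22) := ⟨_, rfl⟩
  obtain ⟨R1, hR1⟩ : ∃ x, x = Real.sqrt ((μ2*σ12 - μ1*σ22)^2 + μ2^2*(σ11*σ22 - σ12^2)) := ⟨_, rfl⟩
  obtain ⟨R2, hR2⟩ : ∃ x, x = Real.sqrt ((μ1*σ12 - μ2*σ11)^2 + μ1^2*(σ11*σ22 - σ12^2)) := ⟨_, rfl⟩
  obtain ⟨Q, hQ⟩ : ∃ x, x = μ1^2*σ22 - 2*σ12*μ1*μ2 + μ2^2*σ11 := ⟨_, rfl⟩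
  obtain ⟨u, hu⟩ : ∃ x, x = (σ11*σ22 - σ12^2)*t1 - (μ2*σ12 - μ1*σ22) := ⟨_, rfl⟩
  obtain ⟨v, hv⟩ : ∃ x, x = (σ11*σ22 - σ12^2)*t2 - (μ1*σ12 - μ2*σ11) := ⟨_, rfl⟩
  rw [← hR1, ← hR2, ← hu, ← hv]
  have hQpos : 0 < Q := by rw [hQ]; nlinarith [sq_nonneg (μ1*σ22 - μ2*σ12), mul_pos hm2sq hdet]
  have hSpos : 0 < S := hS ▸ Real.sqrt_pos.mpr (by positivity)
  have hSsq : S^2 = σ11*σ22 := by rw [hS]; exact Real.sq_sqrt (by positivity)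
  have hR1pos : 0 < R1 := hR1 ▸ Real.sqrt_pos.mpr (by nlinarith [sq_nonneg (μ2*σ12 - μ1*σ22), mul_pos hm2sq hdet])
  have hR2pos : 0 < R2 := hR2 ▸ Real.sqrt_pos.mpr (by nlinarith [sq_nonneg (μ1*σ12 - μ2*σ11), mul_pos hm1sq hdet])
  have hR1sq : R1^2 = σ22*Q := by
    rw [hR1, Real.sq_sqrt (by nlinarith [sq_nonneg (μ2*σ12 - μ1*σ22), mul_pos hm2sq hdet]), hQ]; ring
  have hR2sq : R2^2 = σ11*Q := by
    rw [hR2, Real.sq_sqrt (by nlinarith [sq_nonneg (μ1*σ12 - μ2*σ11), mul_pos hm1sq hdet]), hQ]; ring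
  have hprod : R1 * R2 = S * Q := by
    have h1 : (R1*R2)^2 = (S*Q)^2 := by rw [mul_pow, mul_pow, hR1sq, hR2sq, hSsq]; ring
    nlinarith [mul_pos hR1pos hR2pos, mul_pos hSpos hQpos]
  have hc : Real.cos β = -σ12/S := by
    rw [hβ, hS]
    exact Real.cos_arccos (by rw [le_div_iff₀ (hS ▸ hSpos)]; nlinarith)
      (by rw [div_le_one (hS ▸ hSpos)]; nlinarith)
  have hs2 : Real.sin β^2 = (σ11*σ22 - σ12^2) / (σ11*σ22) := by
    have h1 : Real.sin β^2 = 1 - Real.cos β^2 := by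
      have := Real.sin_sq_add_cos_sq β; linarith
    rw [h1, hc, div_pow, hSsq]; field_simp
  have hsinpos : 0 < Real.sin β := by
    have h0 : 0 ≤ Real.sin β := by
      rw [hβ]; exact Real.sin_nonneg_of_nonneg_of_le_pi (Real.arccos_nonneg _) (Real.arccos_le_pi _)
    have hne : Real.sin β ≠ 0 := by
      intro h; rw [h] at hs2
      have := div_pos hdet (mul_pos h11 h22)
      simp at hs2; nlinarith
    exact lt_of_le_of_ne h0 (Ne.symm hne)
  have hpoly : σ11*u^2 + 2*σ12*u*v + σ22*v^2 = (σ11*σ22 - σ12^2)*Q := by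
    rw [hu, hv, hQ]; linear_combination (2*(σ11*σ22 - σ12^2)^2) * hγr
  -- key circle identity for x = u/R1, y = v/R2
  have hkey : (u/R1)^2 - 2*(u/R1)*(v/R2)*Real.cos β + (v/R2)^2 = Real.sin β^2 := by
    rw [hc, hs2]
    field_simp
    linear_combination (σ11*σ22*u^2*S - S*(σ11*σ22 - σ12^2)*R1^2) * hR2sq +
      (σ11*σ22*v^2*S - S*(σ11*σ22 - σ12^2)*σ11*Q) * hR1sq +
      (σ11*σ22*2*u*v*σ12) * hprod + (σ11*σ22*S*Q) * hpoly
  have hpyth := Real.sin_sq_add_cos_sq β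
  have hdisc : (v/R2 - (u/R1)*Real.cos β)^2 = Real.sin β^2 * (1 - (u/R1)^2) := by
    linear_combination hkey + (u/R1)^2 * hpyth
  have hx2 : (u/R1)^2 ≤ 1 :=
    sq_le_one_aux _ _ hsinpos (hdisc ▸ sq_nonneg (v/R2 - (u/R1)*Real.cos β))
  have hw : (u/R1)^2 + ((v/R2 - (u/R1)*Real.cos β)/Real.sin β)^2 = 1 := by
    have h2 : ((v/R2 - (u/R1)*Real.cos β)/Real.sin β)^2 = 1 - (u/R1)^2 := by
      rw [div_pow, hdisc, mul_comm, mul_div_assoc, div_self (by positivity), mul_one]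
    linarith
  obtain ⟨φ, hcos, hsin⟩ := exists_angle _ _ hw
  refine ⟨φ, ?_, ?_⟩
  · rw [hcos]; field_simp
  · rw [Real.cos_sub, hcos, hsin, div_mul_cancel₀ _ (ne_of_gt hsinpos)]
    field_simp
    ring


lemma stmt4_conj_inv (s : ℂ) (h : ‖s‖ = 1) : 1/s = starRingEnd ℂ s := by
  have hs : s ≠ 0 := by intro h0; simp [h0] at h
  have h2 : s * starRingEnd ℂ s = 1 := by
    rw [Complex.mul_conj]; norm_cast; rw [← Complex.sq_norm, h]; norm_num
  field_simp
  linear_combination -h2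

open Complex in
lemma stmt4_two_cos (φ : ℝ) :
    Complex.exp ((φ:ℂ)*I) + 1/Complex.exp ((φ:ℂ)*I) = 2 * (Real.cos φ : ℂ) := by
  rw [one_div, ← Complex.exp_neg, Complex.exp_mul_I,
    show -((φ:ℂ)*I) = (-φ:ℂ)*I by ring, Complex.exp_mul_I]
  simp [Complex.cos_neg, Complex.sin_neg, ← Complex.ofReal_cos]
  ring

open Complex in
lemma stmt4_two_cos' (φ β : ℝ) :
    Complex.exp ((φ:ℂ)*I) * Complex.exp (-(β:ℂ)*I) + Complex.exp ((β:ℂ)*I)/Complex.exp ((φ:ℂ)*I)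
      = 2 * (Real.cos (φ - β) : ℂ) := by
  rw [← Complex.exp_sub, ← Complex.exp_add]
  rw [show (φ:ℂ)*I + -(β:ℂ)*I = ((φ-β:ℝ):ℂ)*I by push_cast; ring,
      show (β:ℂ)*I - (φ:ℂ)*I = (-((φ-β:ℝ):ℂ))*I by push_cast; ring]
  rw [Complex.exp_mul_I, Complex.exp_mul_I, Complex.cos_neg, Complex.sin_neg, ← Complex.ofReal_cos]
  ring



/-- The kernel `γ(θ₁,θ₂)`. -/
noncomputable def gam (σ11 σ12 σ22 μ1 μ2 : ℝ) (θ1 θ2 : ℂ) : ℂ :=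
  (1 / 2) * ((σ11 : ℂ) * θ1 ^ 2 + 2 * (σ12 : ℂ) * θ1 * θ2 + (σ22 : ℂ) * θ2 ^ 2) +
    (μ1 : ℂ) * θ1 + (μ2 : ℂ) * θ2

/-- The uniformization `θ₁(s)`. -/
noncomputable def unif1 (θ1p θ1m : ℝ) (s : ℂ) : ℂ :=
  ((θ1p : ℂ) + (θ1m : ℂ)) / 2 + ((θ1p : ℂ) - (θ1m : ℂ)) / 4 * (s + 1 / s)

/-- The uniformization `θ₂(s)`. -/
noncomputable def unif2 (θ2p θ2m β : ℝ) (s : ℂ) : ℂ :=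
  ((θ2p : ℂ) + (θ2m : ℂ)) / 2 + ((θ2p : ℂ) - (θ2m : ℂ)) / 4 *
    (s * Complex.exp (-(β : ℂ) * Complex.I) + Complex.exp ((β : ℂ) * Complex.I) / s)

/-- The uniformization maps the unit circle onto the real points of the zero set of the
kernel, and the branch points satisfy `θ₁(1) = θ₁⁺`, `θ₁(−1) = θ₁⁻`, `θ₂(e^{iβ}) = θ₂⁺`,
`θ₂(−e^{iβ}) = θ₂⁻`. -/
theorem stmt4 (σ11 σ12 σ22 μ1 μ2 : ℝ)
    (h11 : 0 < σ11) (h22 : 0 < σ22) (hdet : 0 < σ11 * σ22 - σ12 ^ 2)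
    (hμ1 : μ1 < 0) (hμ2 : μ2 < 0)
    (θ1p θ1m θ2p θ2m β : ℝ)
    (hθ1p : θ1p = ((μ2 * σ12 - μ1 * σ22) +
      Real.sqrt ((μ2 * σ12 - μ1 * σ22) ^ 2 + μ2 ^ 2 * (σ11 * σ22 - σ12 ^ 2))) /
      (σ11 * σ22 - σ12 ^ 2))
    (hθ1m : θ1m = ((μ2 * σ12 - μ1 * σ22) -
      Real.sqrt ((μ2 * σ12 - μ1 * σ22) ^ 2 + μ2 ^ 2 * (σ11 * σ22 - σ12 ^ 2))) /
      (σ11 * σ22 - σ12 ^ 2))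
    (hθ2p : θ2p = ((μ1 * σ12 - μ2 * σ11) +
      Real.sqrt ((μ1 * σ12 - μ2 * σ11) ^ 2 + μ1 ^ 2 * (σ11 * σ22 - σ12 ^ 2))) /
      (σ11 * σ22 - σ12 ^ 2))
    (hθ2m : θ2m = ((μ1 * σ12 - μ2 * σ11) -
      Real.sqrt ((μ1 * σ12 - μ2 * σ11) ^ 2 + μ1 ^ 2 * (σ11 * σ22 - σ12 ^ 2))) /
      (σ11 * σ22 - σ12 ^ 2))
    (hβ : β = Real.arccos (-σ12 / Real.sqrt (σ11 * σ22))) :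
    (∀ s : ℂ, ‖s‖ = 1 →
      (unif1 θ1p θ1m s).im = 0 ∧ (unif2 θ2p θ2m β s).im = 0) ∧
    (∀ t1 t2 : ℝ, gam σ11 σ12 σ22 μ1 μ2 (t1 : ℂ) (t2 : ℂ) = 0 →
      ∃ s : ℂ, ‖s‖ = 1 ∧
        unif1 θ1p θ1m s = (t1 : ℂ) ∧ unif2 θ2p θ2m β s = (t2 : ℂ)) ∧
    unif1 θ1p θ1m 1 = (θ1p : ℂ) ∧
    unif1 θ1p θ1m (-1) = (θ1m : ℂ) ∧
    unif2 θ2p θ2m β (Complex.exp ((β : ℂ) * Complex.I)) = (θ2p : ℂ) ∧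
    unif2 θ2p θ2m β (-Complex.exp ((β : ℂ) * Complex.I)) = (θ2m : ℂ) := by
  have hDne : (σ11 * σ22 - σ12^2) ≠ 0 := ne_of_gt hdet
  refine ⟨?_, ?_, ?_, ?_, ?_, ?_⟩
  · -- forward: real on the unit circle
    intro s hs
    have hconj : 1/s = starRingEnd ℂ s := stmt4_conj_inv s hs
    constructor
    · rw [unif1, hconj, Complex.add_conj]
      simp
    · have hcexp : starRingEnd ℂ (Complex.exp (-(β:ℂ)*Complex.I)) = Complex.exp ((β:ℂ)*Complex.I) := by
        rw [← Complex.exp_conj]; congr 1; simp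
      have h2 : Complex.exp ((β:ℂ)*Complex.I)/s = starRingEnd ℂ (s * Complex.exp (-(β:ℂ)*Complex.I)) := by
        rw [map_mul, hcexp, ← hconj]; ring
      rw [unif2, h2, Complex.add_conj]
      simp
  · -- converse
    intro t1 t2 hγ
    have hγr : (1/2)*(σ11*t1^2 + 2*σ12*t1*t2 + σ22*t2^2) + μ1*t1 + μ2*t2 = 0 := by
      have h : (((1/2)*(σ11*t1^2 + 2*σ12*t1*t2 + σ22*t2^2) + μ1*t1 + μ2*t2 : ℝ) : ℂ) = 0 := by
        simp only [gam] at hγ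
        push_cast
        linear_combination hγ
      exact_mod_cast h
    obtain ⟨φ, he1, he2⟩ := stmt4_ellipse_param σ11 σ12 σ22 μ1 μ2 h11 h22 hdet hμ1 hμ2 β hβ t1 t2 hγr
    refine ⟨Complex.exp ((φ:ℂ)*Complex.I), Complex.norm_exp_ofReal_mul_I φ, ?_, ?_⟩
    · have hr1 : (θ1p+θ1m)/2 + (θ1p-θ1m)/2 * Real.cos φ = t1 := by
        rw [hθ1p, hθ1m]
        linear_combination he1/(σ11 * σ22 - σ12 ^ 2) + t1 * div_self hDne
      rw [unif1, stmt4_two_cos φ, show ((θ1p:ℂ)+θ1m)/2 + ((θ1p:ℂ)-θ1m)/4 * (2*(Real.cos φ : ℂ))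
        = (((θ1p+θ1m)/2 + (θ1p-θ1m)/2 * Real.cos φ : ℝ) : ℂ) by push_cast; ring, hr1]
    · have hr2 : (θ2p+θ2m)/2 + (θ2p-θ2m)/2 * Real.cos (φ - β) = t2 := by
        rw [hθ2p, hθ2m]
        linear_combination he2/(σ11 * σ22 - σ12 ^ 2) + t2 * div_self hDne
      rw [unif2, stmt4_two_cos' φ β, show ((θ2p:ℂ)+θ2m)/2 + ((θ2p:ℂ)-θ2m)/4 * (2*(Real.cos (φ-β) : ℂ))
        = (((θ2p+θ2m)/2 + (θ2p-θ2m)/2 * Real.cos (φ-β) : ℝ) : ℂ) by push_cast; ring, hr2]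
  · rw [unif1]; ring
  · rw [unif1]; ring
  · have h1 : Complex.exp ((β:ℂ)*Complex.I) * Complex.exp (-(β:ℂ)*Complex.I) = 1 := by
      rw [← Complex.exp_add, show (β:ℂ)*Complex.I + -(β:ℂ)*Complex.I = 0 by ring, Complex.exp_zero]
    have h2 : Complex.exp ((β:ℂ)*Complex.I) / Complex.exp ((β:ℂ)*Complex.I) = 1 :=
      div_self (Complex.exp_ne_zero _)
    rw [unif2, h1, h2]; ring
  · have h1 : (-Complex.exp ((β:ℂ)*Complex.I)) * Complex.exp (-(β:ℂ)*Complex.I) = -1 := by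
      rw [neg_mul, ← Complex.exp_add, show (β:ℂ)*Complex.I + -(β:ℂ)*Complex.I = 0 by ring,
        Complex.exp_zero]
    have h2 : Complex.exp ((β:ℂ)*Complex.I) / (-Complex.exp ((β:ℂ)*Complex.I)) = -1 := by
      rw [div_neg, div_self (Complex.exp_ne_zero _)]
    rw [unif2, h1, h2]; ring
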